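/- Let N, d ≥ 1, B > 0, ε ≥ 0, τ ≥ 1 a natural number, and θ* ∈ ℝ^d. Let θ_1,…,θ_N ∈ ℝ^d with average θ̄ = (1/N)∑_i θ_i and consensus error S = ∑_i ‖θ_i − θ̄‖², and let θ'_1,…,θ'_N ∈ ℝ^d with average θ̄' and consensus error S' = ∑_i ‖θ'_i − θ̄'‖². Assume ‖θ̄ − θ̄'‖ ≤ 3εBτ(‖θ̄‖ + √(S') + 1), and let g_1,…,g_N, h_1,…,h_N ∈ ℝ^d satisfy ‖g_i‖ ≤ B(‖θ_i‖+1) and ‖h_i‖ ≤ B(‖θ̄‖+1) for all i. Then ⟨θ̄ − θ̄', ∑_{i=1}^N (g_i − h_i)⟩ ≤ 30 ετ B² ( N‖θ̄ − θ*‖² + N S' + S + N(‖θ*‖² + 1) ). -/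

import Mathlib

/-- Euclidean norm of a vector in `ℝ^d` given as a plain function. -/
noncomputable def enorm' {d : ℕ} (v : Fin d → ℝ) : ℝ :=
  ‖(WithLp.equiv 2 (Fin d → ℝ)).symm v‖

/-- Euclidean inner product of two vectors in `ℝ^d` given as plain functions. -/
noncomputable def edot {d : ℕ} (u v : Fin d → ℝ) : ℝ :=
  inner ℝ ((WithLp.equiv 2 (Fin d → ℝ)).symm u) ((WithLp.equiv 2 (Fin d → ℝ)).symm v)


lemma scalar_drift_aux (u w s' nb P Q : ℝ) (hu0 : 0 ≤ u) (hw0 : 0 ≤ w)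
    (hs'0 : 0 ≤ s') (hb0 : 0 ≤ nb) (hP0 : 0 ≤ P) (hQ0 : 0 ≤ Q)
    (htri : nb ≤ P + Q) :
    ((nb + 1) + s') * (u * w + 2 * u ^ 2 * (nb + 1))
      ≤ 10 * (u ^ 2 * P ^ 2 + u ^ 2 * s' ^ 2 + w ^ 2 + u ^ 2 * (Q ^ 2 + 1)) := by
  have ha2 : (nb + 1) ^ 2 ≤ 3 * (P ^ 2 + Q ^ 2 + 1) := by
    nlinarith [sq_nonneg (P - Q), sq_nonneg (P - 1), sq_nonneg (Q - 1)]
  have ha2u : u ^ 2 * (nb + 1) ^ 2 ≤ 3 * u ^ 2 * (P ^ 2 + Q ^ 2 + 1) := by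
    have := mul_le_mul_of_nonneg_left ha2 (sq_nonneg u)
    linarith
  nlinarith [sq_nonneg (2 * u * (nb + 1) - 3 * w), sq_nonneg (u * s' - w),
    mul_nonneg (sq_nonneg u) (sq_nonneg ((nb + 1) - s')), ha2u,
    sq_nonneg (u * s'), sq_nonneg w]

/-- Bound on the drift cross term `T₁`:
`⟨θ̄ − θ̄', ∑ (gᵢ − hᵢ)⟩ ≤ 30 ετ B² (N‖θ̄ − θ*‖² + N S' + S + N(‖θ*‖² + 1))`. -/
theorem drift_cross_term_bound (N d : ℕ) (hN : 1 ≤ N) (hd : 1 ≤ d)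
    (B ε : ℝ) (hB : 0 < B) (hε : 0 ≤ ε) (τ : ℕ) (hτ : 1 ≤ τ)
    (θstar : Fin d → ℝ)
    (θ θ' : Fin N → Fin d → ℝ)
    (θbar : Fin d → ℝ) (hθbar : θbar = fun j => (N : ℝ)⁻¹ * ∑ i, θ i j)
    (θbar' : Fin d → ℝ) (hθbar' : θbar' = fun j => (N : ℝ)⁻¹ * ∑ i, θ' i j)
    (S : ℝ) (hS : S = ∑ i, (enorm' (fun j => θ i j - θbar j)) ^ 2)
    (S' : ℝ) (hS' : S' = ∑ i, (enorm' (fun j => θ' i j - θbar' j)) ^ 2)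
    (hdrift : enorm' (θbar - θbar') ≤ 3 * ε * B * τ * (enorm' θbar + Real.sqrt S' + 1))
    (g h : Fin N → Fin d → ℝ)
    (hg : ∀ i, enorm' (g i) ≤ B * (enorm' (θ i) + 1))
    (hh : ∀ i, enorm' (h i) ≤ B * (enorm' θbar + 1)) :
    edot (θbar - θbar') (∑ i, (g i - h i))
      ≤ 30 * ε * τ * B ^ 2 *
          (N * (enorm' (θbar - θstar)) ^ 2 + N * S' + S
            + N * ((enorm' θstar) ^ 2 + 1)) := by
  have hS0 : 0 ≤ S := by
    rw [hS]; positivity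
  have hS'0 : 0 ≤ S' := by
    rw [hS']; positivity
  set s' := Real.sqrt S' with hs'def
  have hs'0 : 0 ≤ s' := Real.sqrt_nonneg _
  have hs'sq : s' ^ 2 = S' := Real.sq_sqrt hS'0
  set w := Real.sqrt S with hwdef
  have hw0 : 0 ≤ w := Real.sqrt_nonneg _
  have hwsq : w ^ 2 = S := Real.sq_sqrt hS0
  set u := Real.sqrt N with hudef
  have hu0 : 0 ≤ u := Real.sqrt_nonneg _
  have husq : u ^ 2 = (N : ℝ) := Real.sq_sqrt (by positivity)
  -- Step A: Cauchy–Schwarz for the inner product, and triangle inequality for the sum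
  have hA : edot (θbar - θbar') (∑ i, (g i - h i))
      ≤ enorm' (θbar - θbar') * ∑ i, (enorm' (g i) + enorm' (h i)) := by
    have h1 : edot (θbar - θbar') (∑ i, (g i - h i))
        ≤ enorm' (θbar - θbar') * enorm' (∑ i, (g i - h i)) := real_inner_le_norm _ _
    refine h1.trans (mul_le_mul_of_nonneg_left ?_ (norm_nonneg _))
    have he : (WithLp.equiv 2 (Fin d → ℝ)).symm (∑ i, (g i - h i))
        = ∑ i, ((WithLp.equiv 2 (Fin d → ℝ)).symm (g i)
            - (WithLp.equiv 2 (Fin d → ℝ)).symm (h i)) := by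
        simp only [WithLp.equiv_symm_apply, WithLp.toLp_sum, WithLp.toLp_sub]
    unfold enorm'
    rw [he]
    exact (norm_sum_le _ _).trans (Finset.sum_le_sum fun i _ => norm_sub_le _ _)
  -- triangle inequality: ‖θ i‖ ≤ ‖θ i − θ̄‖ + ‖θ̄‖
  have hc : ∀ i : Fin N, enorm' (θ i) ≤ enorm' (fun j => θ i j - θbar j) + enorm' θbar := by
    intro i
    have hx : θ i = (fun j => θ i j - θbar j) + θbar := by funext j; simp
    calc enorm' (θ i) = ‖(WithLp.equiv 2 (Fin d → ℝ)).symm (fun j => θ i j - θbar j)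
          + (WithLp.equiv 2 (Fin d → ℝ)).symm θbar‖ := by
          conv_lhs => rw [hx]
          rfl
      _ ≤ _ := norm_add_le _ _
  -- Cauchy–Schwarz for sums: ∑ ‖θ i − θ̄‖ ≤ √N √S
  have hCS : ∑ i, enorm' (fun j => θ i j - θbar j) ≤ u * w := by
    have key : (∑ i, enorm' (fun j => θ i j - θbar j)) ^ 2 ≤ (N : ℝ) * S := by
      rw [hS]
      simpa using sq_sum_le_card_mul_sum_sq (s := (Finset.univ : Finset (Fin N)))
        (f := fun i => enorm' (fun j => θ i j - θbar j))
    calc ∑ i, enorm' (fun j => θ i j - θbar j)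
        = Real.sqrt ((∑ i, enorm' (fun j => θ i j - θbar j)) ^ 2) :=
          (Real.sqrt_sq (Finset.sum_nonneg fun i _ => norm_nonneg _)).symm
      _ ≤ Real.sqrt ((N : ℝ) * S) := Real.sqrt_le_sqrt key
      _ = u * w := Real.sqrt_mul (by positivity) _
  -- bound on the sum of norms
  have hsum : ∑ i, (enorm' (g i) + enorm' (h i))
      ≤ B * (u * w) + 2 * N * B * (enorm' θbar + 1) := by
    have step : ∀ i : Fin N, enorm' (g i) + enorm' (h i)
        ≤ B * enorm' (fun j => θ i j - θbar j) + 2 * B * (enorm' θbar + 1) := by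
      intro i
      have h1 := mul_le_mul_of_nonneg_left (hc i) hB.le
      nlinarith [hg i, hh i]
    calc ∑ i, (enorm' (g i) + enorm' (h i))
        ≤ ∑ i, (B * enorm' (fun j => θ i j - θbar j) + 2 * B * (enorm' θbar + 1)) :=
          Finset.sum_le_sum fun i _ => step i
      _ = B * (∑ i, enorm' (fun j => θ i j - θbar j)) + 2 * N * B * (enorm' θbar + 1) := by
          rw [Finset.sum_add_distrib, ← Finset.mul_sum, Finset.sum_const]
          simp [Finset.card_univ, nsmul_eq_mul]
          ring
      _ ≤ B * (u * w) + 2 * N * B * (enorm' θbar + 1) := by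
          have := mul_le_mul_of_nonneg_left hCS hB.le
          linarith
  -- combine
  have hb0 : (0 : ℝ) ≤ enorm' θbar := norm_nonneg _
  have hE : edot (θbar - θbar') (∑ i, (g i - h i))
      ≤ (3 * ε * B * τ * ((enorm' θbar + 1) + s'))
        * (B * (u * w) + 2 * N * B * (enorm' θbar + 1)) := by
    refine hA.trans ?_
    have hd2 : enorm' (θbar - θbar') ≤ 3 * ε * B * τ * ((enorm' θbar + 1) + s') := by
      refine hdrift.trans (le_of_eq ?_); ring
    refine mul_le_mul hd2 hsum (Finset.sum_nonneg fun i _ =>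
      add_nonneg (norm_nonneg _) (norm_nonneg _)) ?_
    have hfac : (0 : ℝ) ≤ (enorm' θbar + 1) + s' := by linarith
    have : (0 : ℝ) ≤ 3 * ε * B * τ := by positivity
    exact mul_nonneg this hfac
  -- triangle for θ̄ against θ*
  have htri : enorm' θbar ≤ enorm' (θbar - θstar) + enorm' θstar := by
    have hx : θbar = (θbar - θstar) + θstar := by funext j; simp
    calc enorm' θbar = ‖(WithLp.equiv 2 (Fin d → ℝ)).symm (θbar - θstar)
          + (WithLp.equiv 2 (Fin d → ℝ)).symm θstar‖ := by
          conv_lhs => rw [hx]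
          rfl
      _ ≤ _ := norm_add_le _ _
  set P := enorm' (θbar - θstar) with hPdef
  set Q := enorm' θstar with hQdef
  set nb := enorm' θbar with hnbdef
  have hP0 : (0 : ℝ) ≤ P := norm_nonneg _
  have hQ0 : (0 : ℝ) ≤ Q := norm_nonneg _
  have hX : ((nb + 1) + s') * (u * w + 2 * u ^ 2 * (nb + 1))
      ≤ 10 * (u ^ 2 * P ^ 2 + u ^ 2 * s' ^ 2 + w ^ 2 + u ^ 2 * (Q ^ 2 + 1)) :=
    scalar_drift_aux u w s' nb P Q hu0 hw0 hs'0 hb0 hP0 hQ0 htri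
  -- finish
  rw [← husq, ← hwsq, ← hs'sq]
  calc edot (θbar - θbar') (∑ i, (g i - h i))
      ≤ (3 * ε * B * τ * ((nb + 1) + s')) * (B * (u * w) + 2 * N * B * (nb + 1)) := hE
    _ = (3 * ε * τ * B ^ 2) * (((nb + 1) + s') * (u * w + 2 * u ^ 2 * (nb + 1))) := by
        rw [show ((N : ℝ)) = u ^ 2 from husq.symm]; ring
    _ ≤ (3 * ε * τ * B ^ 2)
          * (10 * (u ^ 2 * P ^ 2 + u ^ 2 * s' ^ 2 + w ^ 2 + u ^ 2 * (Q ^ 2 + 1))) :=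
        mul_le_mul_of_nonneg_left hX (by positivity)
    _ = 30 * ε * τ * B ^ 2
          * (u ^ 2 * P ^ 2 + u ^ 2 * s' ^ 2 + w ^ 2 + u ^ 2 * (Q ^ 2 + 1)) := by ring
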